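/- For every prime p > 3, ∑_{k=1}^{p-1} k² H_k² ≡ (79/108) p − 4/9 (mod p²), as rationals with denominators coprime to p. -/

import Mathlib

open Finset

/-- Harmonic number `H n = ∑_{j=1}^n 1/j`. -/
def H (n : ℕ) : ℚ := ∑ j ∈ Finset.Icc 1 n, (1 : ℚ) / j

/-- Generalized harmonic number `H_n^{(α)} = ∑_{i=1}^n 1/i^α`. -/
def Hgen (n α : ℕ) : ℚ := ∑ i ∈ Finset.Icc 1 n, (1 : ℚ) / (i : ℚ) ^ α

/-- `S m = ∑_{r=0}^m C(m+1,r) B_r B_{m-r}`. -/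
def S (m : ℕ) : ℚ := ∑ r ∈ Finset.range (m + 1),
  ((m + 1).choose r : ℚ) * bernoulli r * bernoulli (m - r)

/-- `r * b = p^m * a` with `p ∤ b`: i.e. `v_p r ≥ m`. -/
def Good (p m : ℕ) (r : ℚ) : Prop :=
  ∃ a b : ℤ, ¬ (p : ℤ) ∣ b ∧ r * b = (p : ℚ) ^ m * a

lemma good_add {p m : ℕ} (hp : p.Prime) {r s : ℚ} (hr : Good p m r) (hs : Good p m s) :
    Good p m (r + s) := by
  obtain ⟨a₁, b₁, hb₁, h₁⟩ := hr
  obtain ⟨a₂, b₂, hb₂, h₂⟩ := hs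
  refine ⟨a₁ * b₂ + a₂ * b₁, b₁ * b₂, ?_, ?_⟩
  · intro h
    rcases (Nat.prime_iff_prime_int.mp hp).dvd_mul.mp h with h | h
    exacts [hb₁ h, hb₂ h]
  · push_cast
    linear_combination (b₂ : ℚ) * h₁ + (b₁ : ℚ) * h₂

lemma good_mul {p m m' : ℕ} (hp : p.Prime) {r s : ℚ} (hr : Good p m r) (hs : Good p m' s) :
    Good p (m + m') (r * s) := by
  obtain ⟨a₁, b₁, hb₁, h₁⟩ := hr
  obtain ⟨a₂, b₂, hb₂, h₂⟩ := hs
  refine ⟨a₁ * a₂, b₁ * b₂, ?_, ?_⟩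
  · intro h
    rcases (Nat.prime_iff_prime_int.mp hp).dvd_mul.mp h with h | h
    exacts [hb₁ h, hb₂ h]
  · push_cast
    rw [pow_add]
    linear_combination (s * (b₂ : ℚ)) * h₁ + ((p : ℚ) ^ m * (a₁ : ℚ)) * h₂

lemma good_weaken {p m k : ℕ} {r : ℚ} (h : Good p (m + k) r) : Good p m r := by
  obtain ⟨a, b, hb, h⟩ := h
  refine ⟨p ^ k * a, b, hb, ?_⟩
  rw [h, pow_add]
  push_cast
  ring

lemma good_zero {p m : ℕ} (hp : 1 < p) : Good p m 0 :=
  ⟨0, 1, fun h => by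
    have := Int.le_of_dvd one_pos h
    omega, by simp⟩

lemma good_sum {p m : ℕ} (hp : p.Prime) {α : Type*} (s : Finset α) (f : α → ℚ)
    (h : ∀ a ∈ s, Good p m (f a)) : Good p m (∑ a ∈ s, f a) := by
  classical
  induction s using Finset.induction_on with
  | empty => simpa using good_zero hp.one_lt
  | @insert x s hx ih =>
    rw [Finset.sum_insert hx]
    exact good_add hp (h _ (Finset.mem_insert_self _ _))
      (ih fun a ha => h a (Finset.mem_insert_of_mem ha))

/-- `r` is `p`-integral with reduction `x` in `ZMod p`. -/
def Good2 (p : ℕ) (r : ℚ) (x : ZMod p) : Prop :=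
  ∃ a b : ℤ, ¬ (p : ℤ) ∣ b ∧ r * b = a ∧ (a : ZMod p) = x * b

lemma good2_add {p : ℕ} (hp : p.Prime) {r s : ℚ} {x y : ZMod p}
    (hr : Good2 p r x) (hs : Good2 p s y) : Good2 p (r + s) (x + y) := by
  obtain ⟨a₁, b₁, hb₁, h₁, e₁⟩ := hr
  obtain ⟨a₂, b₂, hb₂, h₂, e₂⟩ := hs
  refine ⟨a₁ * b₂ + a₂ * b₁, b₁ * b₂, ?_, ?_, ?_⟩
  · intro h
    rcases (Nat.prime_iff_prime_int.mp hp).dvd_mul.mp h with h | h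
    exacts [hb₁ h, hb₂ h]
  · push_cast
    linear_combination (b₂ : ℚ) * h₁ + (b₁ : ℚ) * h₂
  · push_cast
    rw [e₁, e₂]
    ring

lemma good2_zero {p : ℕ} (hp : 1 < p) : Good2 p 0 0 :=
  ⟨0, 1, fun h => by
    have := Int.le_of_dvd one_pos h
    omega, by simp, by simp⟩

lemma good2_sum {p : ℕ} (hp : p.Prime) {α : Type*} (s : Finset α) (f : α → ℚ)
    (g : α → ZMod p) (h : ∀ a ∈ s, Good2 p (f a) (g a)) :
    Good2 p (∑ a ∈ s, f a) (∑ a ∈ s, g a) := by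
  classical
  induction s using Finset.induction_on with
  | empty => simpa using good2_zero hp.one_lt
  | @insert x s hx ih =>
    rw [Finset.sum_insert hx, Finset.sum_insert hx]
    exact good2_add hp (h _ (Finset.mem_insert_self _ _))
      (ih fun a ha => h a (Finset.mem_insert_of_mem ha))

/-- If `r` is `p`-integral with reduction `0`, then `v_p r ≥ 1`. -/
lemma good_of_good2 {p : ℕ} {r : ℚ} (h0 : Good2 p r 0) : Good p 1 r := by
  obtain ⟨a, b, hb, h, e⟩ := h0
  rw [zero_mul] at e
  obtain ⟨c, hc⟩ := (ZMod.intCast_zmod_eq_zero_iff_dvd a p).mp e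
  refine ⟨c, b, hb, ?_⟩
  rw [h, hc]
  push_cast
  ring

lemma good_num {p : ℕ} (hp : p.Prime) {r : ℚ} (h : Good p 2 r) : (p : ℤ) ^ 2 ∣ r.num := by
  obtain ⟨a, b, hb, h⟩ := h
  have hden : ((r.den : ℚ)) ≠ 0 := Nat.cast_ne_zero.mpr r.den_nz
  have hq : (r.num : ℚ) * b = (p : ℚ) ^ 2 * a * r.den := by
    rw [← Rat.num_div_den r] at h
    field_simp at h
    linear_combination h
  have hz : r.num * b = (p : ℤ) ^ 2 * (a * (r.den : ℤ)) := by
    have hq2 : ((r.num * b : ℤ) : ℚ) = (((p : ℤ) ^ 2 * (a * (r.den : ℤ)) : ℤ) : ℚ) := by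
      push_cast
      linear_combination hq
    exact_mod_cast hq2
  have hcop : IsCoprime ((p : ℤ) ^ 2) b :=
    ((Nat.prime_iff_prime_int.mp hp).coprime_iff_not_dvd.mpr hb).pow_left
  exact hcop.dvd_of_dvd_mul_right ⟨a * r.den, hz⟩

theorem test : True := trivial

lemma H_succ (n : ℕ) : H (n + 1) = H n + 1 / (n + 1 : ℚ) := by
  rw [H, H, Finset.sum_Icc_succ_top (by omega : 1 ≤ n + 1)]
  push_cast
  ring

lemma key_identity (n : ℕ) :
    ∑ k ∈ Finset.Icc 1 n, (k : ℚ) ^ 2 * H k ^ 2 =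
      (2 * (n : ℚ) ^ 3 + 3 * (n : ℚ) ^ 2 + n) / 6 * H n ^ 2
      + (-4 * (n : ℚ) ^ 3 + 3 * (n : ℚ) ^ 2 + (n : ℚ) - 3) / 18 * H n
      + (8 * (n : ℚ) ^ 3 - 15 * (n : ℚ) ^ 2 + 25 * (n : ℚ)) / 108 := by
  induction n with
  | zero => simp [H]
  | succ n ih =>
    rw [Finset.sum_Icc_succ_top (by omega : 1 ≤ n + 1), ih, H_succ]
    push_cast
    have hn : ((n : ℚ) + 1) ≠ 0 := by positivity
    field_simp
    ring

lemma pairing (p : ℕ) (hp : 2 ≤ p) :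
    2 * H (p - 1) = (p : ℚ) * ∑ k ∈ Finset.Icc 1 (p - 1), 1 / ((k : ℚ) * ((p : ℚ) - k)) := by
  have hrefl : H (p - 1) = ∑ k ∈ Finset.Icc 1 (p - 1), (1 : ℚ) / ((p : ℚ) - k) := by
    rw [H]
    refine Finset.sum_nbij' (fun k => p - k) (fun k => p - k) ?_ ?_ ?_ ?_ ?_
    · intro k hk
      simp only [Finset.mem_Icc] at hk ⊢
      omega
    · intro k hk
      simp only [Finset.mem_Icc] at hk ⊢
      omega
    · intro k hk
      simp only [Finset.mem_Icc] at hk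
      show p - (p - k) = k
      omega
    · intro k hk
      simp only [Finset.mem_Icc] at hk
      show p - (p - k) = k
      omega
    · intro k hk
      simp only [Finset.mem_Icc] at hk
      rw [Nat.cast_sub (by omega : k ≤ p)]
      ring_nf
  calc 2 * H (p - 1) = H (p - 1) + H (p - 1) := by ring
    _ = ∑ k ∈ Finset.Icc 1 (p - 1), ((1 : ℚ) / k + 1 / ((p : ℚ) - k)) := by
        rw [Finset.sum_add_distrib, ← hrefl]
        rfl
    _ = (p : ℚ) * ∑ k ∈ Finset.Icc 1 (p - 1), 1 / ((k : ℚ) * ((p : ℚ) - k)) := by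
        rw [Finset.mul_sum]
        refine Finset.sum_congr rfl fun k hk => ?_
        simp only [Finset.mem_Icc] at hk
        have hk0 : (k : ℚ) ≠ 0 := Nat.cast_ne_zero.mpr (by omega)
        have hpk : (p : ℚ) - k ≠ 0 := by
          have : ((p - k : ℕ) : ℚ) = (p : ℚ) - k := Nat.cast_sub (by omega)
          rw [← this]
          exact Nat.cast_ne_zero.mpr (by omega)
        field_simp
        try ring

lemma zmod_sum_zero (p : ℕ) [hp : Fact p.Prime] (hp3 : 3 < p) :
    ∑ k ∈ Finset.Icc 1 (p - 1), (-((k : ZMod p)) ^ 2)⁻¹ = 0 := by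
  classical
  have h1 : ∑ k ∈ Finset.Icc 1 (p - 1), (-((k : ZMod p)) ^ 2)⁻¹
      = ∑ x ∈ Finset.univ.erase (0 : ZMod p), (-(x ^ 2))⁻¹ := by
    refine Finset.sum_nbij' (fun k => (k : ZMod p)) (fun x => x.val) ?_ ?_ ?_ ?_ ?_
    · intro k hk
      simp only [Finset.mem_Icc] at hk
      refine Finset.mem_erase.mpr ⟨?_, Finset.mem_univ _⟩
      intro h0
      have := (ZMod.natCast_eq_zero_iff k p).mp h0
      have := Nat.le_of_dvd (by omega) this
      omega
    · intro x hx
      have hx0 : x ≠ 0 := (Finset.mem_erase.mp hx).1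
      have hlt : x.val < p := ZMod.val_lt x
      have hne : x.val ≠ 0 := fun h => hx0 (by rwa [← ZMod.val_eq_zero])
      simp only [Finset.mem_Icc]
      omega
    · intro k hk
      simp only [Finset.mem_Icc] at hk
      exact ZMod.val_natCast_of_lt (by omega)
    · intro x hx
      exact ZMod.natCast_zmod_val x
    · intro k hk
      rfl
  have h2 : ∑ x ∈ Finset.univ.erase (0 : ZMod p), (-(x ^ 2))⁻¹
      = -∑ x ∈ Finset.univ.erase (0 : ZMod p), (x⁻¹) ^ 2 := by
    rw [← Finset.sum_neg_distrib]
    refine Finset.sum_congr rfl fun x hx => ?_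
    rw [inv_neg, inv_pow]
  have h3 : ∑ x ∈ Finset.univ.erase (0 : ZMod p), (x⁻¹) ^ 2
      = ∑ x ∈ Finset.univ.erase (0 : ZMod p), x ^ 2 := by
    refine Finset.sum_nbij' (fun x => x⁻¹) (fun x => x⁻¹) ?_ ?_ ?_ ?_ ?_
    · intro x hx
      exact Finset.mem_erase.mpr ⟨inv_ne_zero (Finset.mem_erase.mp hx).1, Finset.mem_univ _⟩
    · intro x hx
      exact Finset.mem_erase.mpr ⟨inv_ne_zero (Finset.mem_erase.mp hx).1, Finset.mem_univ _⟩
    · intro x hx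
      exact inv_inv x
    · intro x hx
      exact inv_inv x
    · intro x hx
      rfl
  have h4 : ∑ x ∈ Finset.univ.erase (0 : ZMod p), x ^ 2 = ∑ x : ZMod p, x ^ 2 :=
    Finset.sum_erase _ (by simp)
  have h5 : ∑ x : ZMod p, x ^ 2 = 0 := by
    have hcard : Fintype.card (ZMod p) = p := ZMod.card p
    exact FiniteField.sum_pow_lt_card_sub_one (K := ZMod p) (i := 2) (by rw [hcard]; omega)
  rw [h1, h2, h3, h4, h5, neg_zero]

lemma good2_term (p : ℕ) (hp : p.Prime) (k : ℕ) (hk1 : 1 ≤ k) (hk2 : k ≤ p - 1) :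
    Good2 p (1 / ((k : ℚ) * ((p : ℚ) - k))) ((-((k : ZMod p)) ^ 2)⁻¹) := by
  haveI : Fact p.Prime := ⟨hp⟩
  have hp2 : 2 ≤ p := hp.two_le
  have hkp : k < p := by omega
  refine ⟨1, (k : ℤ) * ((p : ℤ) - k), ?_, ?_, ?_⟩
  · intro h
    rcases (Nat.prime_iff_prime_int.mp hp).dvd_mul.mp h with h | h
    · have : (p : ℤ) ∣ (k : ℤ) := h
      have : p ∣ k := Int.ofNat_dvd.mp this
      have := Nat.le_of_dvd (by omega) this
      omega
    · have hpk : (p : ℤ) ∣ (k : ℤ) := by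
        have := dvd_sub (dvd_refl (p : ℤ)) h
        simpa using this
      have : p ∣ k := Int.ofNat_dvd.mp hpk
      have := Nat.le_of_dvd (by omega) this
      omega
  · have hk0 : (k : ℚ) ≠ 0 := Nat.cast_ne_zero.mpr (by omega)
    have hpk : (p : ℚ) - k ≠ 0 := by
      have : ((p - k : ℕ) : ℚ) = (p : ℚ) - k := Nat.cast_sub (by omega)
      rw [← this]
      exact Nat.cast_ne_zero.mpr (by omega)
    push_cast
    field_simp
  · have hk0 : (k : ZMod p) ≠ 0 := by
      intro h0
      have := (ZMod.natCast_eq_zero_iff k p).mp h0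
      have := Nat.le_of_dvd (by omega) this
      omega
    have hne : (-((k : ZMod p)) ^ 2) ≠ 0 := by
      simpa using pow_ne_zero 2 hk0
    have hcast : (((k : ℤ) * ((p : ℤ) - k) : ℤ) : ZMod p) = -((k : ZMod p)) ^ 2 := by
      push_cast
      rw [ZMod.natCast_self]
      ring
    rw [hcast, inv_mul_cancel₀ hne]
    simp

lemma wolstenholme (p : ℕ) (hp : p.Prime) (hp3 : 3 < p) : Good p 2 (H (p - 1)) := by
  haveI : Fact p.Prime := ⟨hp⟩
  have hZ2 : Good2 p (∑ k ∈ Finset.Icc 1 (p - 1), 1 / ((k : ℚ) * ((p : ℚ) - k)))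
      (∑ k ∈ Finset.Icc 1 (p - 1), (-((k : ZMod p)) ^ 2)⁻¹) := by
    refine good2_sum hp _ _ _ fun k hk => ?_
    simp only [Finset.mem_Icc] at hk
    exact good2_term p hp k hk.1 hk.2
  rw [zmod_sum_zero p hp3] at hZ2
  obtain ⟨a, b, hb, hab⟩ := good_of_good2 hZ2
  have hpair := pairing p hp.two_le
  refine ⟨a, 2 * b, ?_, ?_⟩
  · intro h
    rcases (Nat.prime_iff_prime_int.mp hp).dvd_mul.mp h with h | h
    · have : p ∣ 2 := by exact_mod_cast h
      have := Nat.le_of_dvd (by norm_num) this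
      omega
    · exact hb h
  · push_cast
    linear_combination (b : ℚ) * hpair + (p : ℚ) * hab

lemma not_dvd_23 {p : ℕ} (hp : p.Prime) (hp3 : 3 < p) (i j : ℕ) :
    ¬ (p : ℤ) ∣ ((2 ^ i * 3 ^ j : ℕ) : ℤ) := by
  intro h
  have h' : p ∣ 2 ^ i * 3 ^ j := by exact_mod_cast h
  rcases hp.dvd_mul.mp h' with h'' | h''
  · have := Nat.le_of_dvd (by norm_num) (hp.dvd_of_dvd_pow h'')
    omega
  · have := Nat.le_of_dvd (by norm_num) (hp.dvd_of_dvd_pow h'')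
    omega

theorem stmt9 (p : ℕ) (hp : p.Prime) (hp3 : 3 < p) :
    (p : ℤ) ^ 2 ∣ ((∑ k ∈ Finset.Icc 1 (p - 1), (k : ℚ) ^ 2 * H k ^ 2)
      - (79 / 108 * (p : ℚ) - 4 / 9)).num := by
  apply good_num hp
  rw [key_identity (p - 1)]
  have hcast : ((p - 1 : ℕ) : ℚ) = (p : ℚ) - 1 := by
    rw [Nat.cast_sub hp.one_le, Nat.cast_one]
  rw [hcast]
  obtain ⟨a, c, hc, hH⟩ := wolstenholme p hp hp3
  refine ⟨18 * (2 * ((p : ℤ) - 1) ^ 3 + 3 * ((p : ℤ) - 1) ^ 2 + ((p : ℤ) - 1)) * (p : ℤ) ^ 2 * a ^ 2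
      + 6 * (-4 * ((p : ℤ) - 1) ^ 3 + 3 * ((p : ℤ) - 1) ^ 2 + ((p : ℤ) - 1) - 3) * a * c
      + (8 * (p : ℤ) - 39) * c ^ 2, 108 * c ^ 2, ?_, ?_⟩
  · intro h
    rcases (Nat.prime_iff_prime_int.mp hp).dvd_mul.mp h with h | h
    · have := not_dvd_23 hp hp3 2 3
      norm_num at this
      exact this h
    · rw [sq] at h
      rcases (Nat.prime_iff_prime_int.mp hp).dvd_mul.mp h with h | h <;> exact hc h
  · push_cast
    linear_combination ((18 * (2 * ((p:ℚ) - 1) ^ 3 + 3 * ((p:ℚ) - 1) ^ 2 + ((p:ℚ) - 1)))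
        * (H (p - 1) * (c : ℚ) + (p : ℚ) ^ 2 * (a : ℚ))
      + 6 * (-4 * ((p:ℚ) - 1) ^ 3 + 3 * ((p:ℚ) - 1) ^ 2 + ((p:ℚ) - 1) - 3) * (c : ℚ)) * hH
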